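/- If an edge e ∈ E lies on a taut cycle — that is, there is a closed walk v_0 v_1 ⋯ v_n with v_n = v_0, n ≥ 2, that uses e as one of its edges and such that for every index i (taken cyclically modulo n) the pair of edges (v_{i−1}v_i, v_i v_{i+1}) is taut at v_i — then L(e) = ∞, i.e., e is a level-W edge. -/

import Mathlib

open SimpleGraph

variable {V : Type*}

/-- The set of levels (under `L`) of taut neighbours of edge `e` at vertex `v`:
edges `f` of `G` incident to `v` such that the turn from `e` to `f` at `v` is taut. -/
def tautNbrLevels (G : SimpleGraph V) (taut : V → Sym2 V → Sym2 V → Prop)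
    (L : Sym2 V → ℕ∞) (v : V) (e : Sym2 V) : Set ℕ∞ :=
  {n | ∃ f ∈ G.edgeSet, v ∈ f ∧ taut v e f ∧ n = L f}

/-- The monotone operator on `E → ℕ∞` whose least fixed point defines edge levels:
`(levelOp L) e = 1 + min over the endpoints v of e of sup {L f : f taut neighbour of e at v}`
(with `sSup ∅ = 0`). -/
noncomputable def levelOp (G : SimpleGraph V) (taut : V → Sym2 V → Sym2 V → Prop)
    (L : Sym2 V → ℕ∞) (e : Sym2 V) : ℕ∞ :=
  1 + ⨅ v ∈ e, sSup (tautNbrLevels G taut L v e)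

/-- `L` is the edge-level function: the pointwise least fixed point (on edges of `G`)
of the level operator. -/
def IsEdgeLevel (G : SimpleGraph V) (taut : V → Sym2 V → Sym2 V → Prop)
    (L : Sym2 V → ℕ∞) : Prop :=
  (∀ e ∈ G.edgeSet, L e = levelOp G taut L e) ∧
  ∀ L' : Sym2 V → ℕ∞, (∀ e ∈ G.edgeSet, L' e = levelOp G taut L' e) →
    ∀ e ∈ G.edgeSet, L e ≤ L' e

/-- If an edge lies on a taut cycle (a closed walk `q 0 q 1 ⋯ q n`, `n ≥ 2`,
`q n = q 0`, represented here by an `n`-periodic sequence, such that at each vertex the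
pair of incident cycle edges is taut), then it is a level-W edge: `L e = ∞`. -/
theorem level_top_of_mem_taut_cycle
    [Fintype V] (G : SimpleGraph V)
    (taut : V → Sym2 V → Sym2 V → Prop)
    (taut_symm : ∀ v e f, taut v e f → taut v f e)
    (L : Sym2 V → ℕ∞) (hL : IsEdgeLevel G taut L)
    (n : ℕ) (hn : 2 ≤ n) (q : ℕ → V)
    (hper : ∀ i, q (i + n) = q i)
    (hadj : ∀ i, G.Adj (q i) (q (i + 1)))
    (htaut : ∀ i, taut (q (i + 1)) s(q i, q (i + 1)) s(q (i + 1), q (i + 2)))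
    (e : Sym2 V) (he : ∃ j, e = s(q j, q (j + 1))) :
    L e = ⊤ := by
  classical
  obtain ⟨j, rfl⟩ := he
  set m : ℕ∞ := ⨅ i : ℕ, L s(q i, q (i + 1)) with hm
  have hedge : ∀ i, s(q i, q (i + 1)) ∈ G.edgeSet := fun i => (hadj i)
  have key : ∀ i, 1 + m ≤ L s(q i, q (i + 1)) := by
    intro i
    rw [hL.1 _ (hedge i), levelOp]
    refine add_le_add le_rfl ?_
    refine le_iInf₂ fun v hv => ?_
    rw [Sym2.mem_iff] at hv
    rcases hv with rfl | rfl
    · -- endpoint q i : use the previous cycle edge via periodicity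
      set j' := i + (n - 1) with hj'
      have hq1 : q (j' + 1) = q i := by
        have h1 : j' + 1 = i + n := by omega
        rw [h1, hper]
      have hq2 : q (j' + 1 + 1) = q (i + 1) := by
        have h1 : j' + 1 + 1 = (i + 1) + n := by omega
        rw [h1, hper]
      have ht := htaut j'
      rw [hq1, hq2] at ht
      have ht' := taut_symm _ _ _ ht
      have hE : s(q j', q i) ∈ G.edgeSet := by rw [← hq1]; exact hedge j'
      have hLf : m ≤ L s(q j', q i) := by
        rw [← hq1]; exact iInf_le (fun k => L s(q k, q (k + 1))) j'
      exact le_trans hLf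
        (le_sSup ⟨s(q j', q i), hE, Sym2.mem_mk_right _ _, ht', rfl⟩)
    · -- endpoint q (i+1) : use the next cycle edge
      have ht := htaut i
      have hLf : m ≤ L s(q (i + 1), q (i + 1 + 1)) :=
        iInf_le (fun k => L s(q k, q (k + 1))) (i + 1)
      exact le_trans hLf
        (le_sSup ⟨s(q (i + 1), q (i + 1 + 1)), hedge (i + 1),
          Sym2.mem_mk_left _ _, ht, rfl⟩)
  have hm' : 1 + m ≤ m := le_iInf fun i => key i
  have hmtop : m = ⊤ := by
    by_contra h
    have h2 : m + 1 ≤ m := by rw [add_comm]; exact hm'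
    exact lt_irrefl m ((ENat.add_one_le_iff h).mp h2)
  exact eq_top_iff.mpr (hmtop ▸ iInf_le (fun k => L s(q k, q (k + 1))) j)
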